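/- Let T be i.i.d. over {1,2} with P(T_n = 1) = p ∈ (0,1) and X = O_T. Then for all m ≥ 1 and n ≥ m + 2, P(X_m = 2 and X_n = 1) = p · P(X_m = 2); i.e., the event {X_n = 1} is independent of {X_m = 2} at distance ≥ 2. -/

import Mathlib

def dirStep (X : List ℕ) (k t : ℕ) : List ℕ :=
  let X' := X ++ [t]
  X' ++ List.replicate (X'.getD k 1 - 1) t

/-- The word directed by the finite directing word `T`: at step `i` (0-indexed),
append `t_i` followed by `X[i] - 1` further copies of `t_i`. -/
def dirWord (T : List ℕ) : List ℕ :=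
  (T.foldl (fun p t => (dirStep p.1 p.2 t, p.2 + 1)) (([] : List ℕ), 0)).1

/-- The `n`-th letter (1-indexed) of the infinite sequence directed by `T`
(whose meaningful indices are `1, 2, …`). -/
def dirSeq (T : ℕ → ℕ) (n : ℕ) : ℕ :=
  (dirWord (List.ofFn fun i : Fin n => T (i + 1))).getD (n - 1) 0

namespace Stmt11Aux

def W (t : ℕ → ℕ) (k : ℕ) : List ℕ := dirWord (List.ofFn fun i : Fin k => t (i + 1))

def S (t : ℕ → ℕ) : ℕ → ℕ
  | 0 => 0
  | k + 1 => S t k + dirSeq t (k + 1)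

lemma foldl_counter (L : List ℕ) (X : List ℕ) (k : ℕ) :
    (L.foldl (fun p t => (dirStep p.1 p.2 t, p.2 + 1)) (X, k)).2 = k + L.length := by
  induction L generalizing X k with
  | nil => simp
  | cons a L ih => simp [List.foldl, ih]; omega

lemma dirWord_concat (L : List ℕ) (a : ℕ) :
    dirWord (L ++ [a]) = dirStep (dirWord L) L.length a := by
  unfold dirWord
  rw [List.foldl_append]
  have h2 := foldl_counter L ([] : List ℕ) 0
  simp [List.foldl]
  rw [h2]
  simp

lemma W_zero (t : ℕ → ℕ) : W t 0 = [] := by simp [W, dirWord]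

lemma W_succ (t : ℕ → ℕ) (k : ℕ) :
    W t (k + 1) = dirStep (W t k) k (t (k + 1)) := by
  unfold W
  rw [List.ofFn_succ']
  simp only [List.concat_eq_append]
  rw [dirWord_concat]
  simp [Fin.last]

lemma dirSeq_eq_W (t : ℕ → ℕ) (q : ℕ) : dirSeq t q = (W t q).getD (q - 1) 0 := rfl

lemma length_W_ge (t : ℕ → ℕ) (k : ℕ) : k ≤ (W t k).length := by
  induction k with
  | zero => simp
  | succ k ih =>
    rw [W_succ]
    unfold dirStep
    simp only [List.length_append, List.length_replicate, List.length_cons]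
    simp
    omega

lemma W_prefix (t : ℕ → ℕ) {k l : ℕ} (h : k ≤ l) : (W t k) <+: (W t l) := by
  induction l with
  | zero => simp_all
  | succ l ih =>
    rcases Nat.lt_or_ge k (l+1) with h' | h'
    · refine (ih (by omega)).trans ?_
      rw [W_succ]
      unfold dirStep
      simp only []
      rw [List.append_assoc]
      exact List.prefix_append _ _
    · have : k = l + 1 := by omega
      subst this; exact List.prefix_refl _

lemma dirSeq_eq_W_any (t : ℕ → ℕ) {q k : ℕ} (hq : 1 ≤ q) (hk : q ≤ (W t k).length) :
    dirSeq t q = (W t k).getD (q - 1) 0 := by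
  rw [dirSeq_eq_W]
  rcases le_total q k with h | h
  · obtain ⟨r, hr⟩ := W_prefix t h
    rw [← hr, List.getD_append]
    have := length_W_ge t q; omega
  · obtain ⟨r, hr⟩ := W_prefix t h
    rw [← hr, List.getD_append]
    omega

lemma dirSeq_succ_eq (t : ℕ → ℕ) (k : ℕ) :
    dirSeq t (k + 1) = ((W t k) ++ [t (k + 1)]).getD k 1 := by
  have hlen : k < ((W t k) ++ [t (k+1)]).length := by
    simp; have := length_W_ge t k; omega
  have h1 : dirSeq t (k+1) = (W t (k+1)).getD k 0 := dirSeq_eq_W t (k+1)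
  rw [h1, W_succ]
  unfold dirStep
  simp only []
  rw [List.getD_append _ _ _ _ hlen]
  rw [List.getD_eq_getElem _ _ hlen, List.getD_eq_getElem _ _ hlen]

lemma W_step_replicate (t : ℕ → ℕ) (k : ℕ) (h : 1 ≤ dirSeq t (k + 1)) :
    W t (k + 1) = W t k ++ List.replicate (dirSeq t (k + 1)) (t (k + 1)) := by
  rw [W_succ]
  unfold dirStep
  simp only []
  rw [← dirSeq_succ_eq]
  rw [List.append_assoc]
  congr 1
  have : dirSeq t (k+1) = (dirSeq t (k+1) - 1) + 1 := by omega
  rw [this, List.replicate_succ]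
  simp

lemma W_values (t : ℕ → ℕ) (k : ℕ) (H : ∀ i, 1 ≤ i → i ≤ k → t i = 1 ∨ t i = 2) :
    ∀ x ∈ W t k, x = 1 ∨ x = 2 := by
  induction k with
  | zero => simp [W_zero]
  | succ k ih =>
    intro x hx
    rw [W_succ] at hx
    unfold dirStep at hx
    simp only [List.mem_append, List.mem_replicate] at hx
    have ha : t (k+1) = 1 ∨ t (k+1) = 2 := H (k+1) (by omega) le_rfl
    rcases hx with (hx | hx) | hx
    · exact ih (fun i h1 h2 => H i h1 (by omega)) x hx
    · simp at hx; omega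
    · omega

lemma dirSeq_values (t : ℕ → ℕ) {q : ℕ} (hq : 1 ≤ q)
    (H : ∀ i, 1 ≤ i → i ≤ q → t i = 1 ∨ t i = 2) :
    dirSeq t q = 1 ∨ dirSeq t q = 2 := by
  rw [dirSeq_eq_W]
  have hlen : q - 1 < (W t q).length := by have := length_W_ge t q; omega
  rw [List.getD_eq_getElem _ _ hlen]
  exact W_values t q H _ (List.getElem_mem hlen)


section Blocks
variable (t t' : ℕ → ℕ)

lemma length_W (k : ℕ) (H : ∀ i, 1 ≤ i → i ≤ k → t i = 1 ∨ t i = 2) :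
    (W t k).length = S t k := by
  induction k with
  | zero => simp [W_zero, S]
  | succ k ih =>
    have hv : dirSeq t (k+1) = 1 ∨ dirSeq t (k+1) = 2 :=
      dirSeq_values t (by omega) (fun i h1 h2 => H i h1 h2)
    rw [W_step_replicate t k (by omega)]
    simp only [List.length_append, List.length_replicate, S]
    rw [ih (fun i h1 h2 => H i h1 (by omega))]

lemma S_ge (k : ℕ) (H : ∀ i, 1 ≤ i → i ≤ k → t i = 1 ∨ t i = 2) : k ≤ S t k := by
  induction k with
  | zero => simp [S]
  | succ k ih =>
    have hv : dirSeq t (k+1) = 1 ∨ dirSeq t (k+1) = 2 :=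
      dirSeq_values t (by omega) (fun i h1 h2 => H i h1 h2)
    have := ih (fun i h1 h2 => H i h1 (by omega))
    simp only [S]; omega

lemma S_mono : Monotone (S t) := by
  apply monotone_nat_of_le_succ
  intro k; simp [S]

lemma S_le_two_mul (k : ℕ) (H : ∀ i, 1 ≤ i → i ≤ k → t i = 1 ∨ t i = 2) :
    S t k ≤ 2 * k := by
  induction k with
  | zero => simp [S]
  | succ k ih =>
    have hv : dirSeq t (k+1) = 1 ∨ dirSeq t (k+1) = 2 :=
      dirSeq_values t (by omega) (fun i h1 h2 => H i h1 h2)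
    have := ih (fun i h1 h2 => H i h1 (by omega))
    simp only [S]; omega

/-- Block lemma: letters at positions in the (j+1)-st block equal t (j+1). -/
lemma dirSeq_block (j q : ℕ) (H : ∀ i, 1 ≤ i → i ≤ j + 1 → t i = 1 ∨ t i = 2)
    (h1 : S t j < q) (h2 : q ≤ S t (j + 1)) : dirSeq t q = t (j + 1) := by
  have Hj : ∀ i, 1 ≤ i → i ≤ j → t i = 1 ∨ t i = 2 := fun i a b => H i a (by omega)
  have hv : dirSeq t (j+1) = 1 ∨ dirSeq t (j+1) = 2 :=
    dirSeq_values t (by omega) H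
  have hW : W t (j+1) = W t j ++ List.replicate (dirSeq t (j+1)) (t (j+1)) :=
    W_step_replicate t j (by omega)
  have hlenj : (W t j).length = S t j := length_W t j Hj
  have hlen : (W t (j+1)).length = S t (j+1) := length_W t (j+1) H
  have hq1 : 1 ≤ q := by omega
  rw [dirSeq_eq_W_any t hq1 (by omega : q ≤ (W t (j+1)).length)]
  rw [hW, List.getD_append_right _ _ _ _ (by omega)]
  rw [List.getD_eq_getElem _ _ (by simp only [List.length_replicate]; simp only [S] at h2 ⊢; omega)]
  simp

/-- dirSeq only depends on the first q values (indices 1..q). -/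
lemma dirSeq_congr (q : ℕ) (h : ∀ i, 1 ≤ i → i ≤ q → t i = t' i) :
    dirSeq t q = dirSeq t' q := by
  unfold dirSeq
  have : (List.ofFn fun i : Fin q => t (i + 1)) = List.ofFn fun i : Fin q => t' (i + 1) := by
    congr 1
    funext i
    exact h (i + 1) (by omega) (by have := i.isLt; omega)
  rw [this]

lemma S_congr (k : ℕ) (h : ∀ i, 1 ≤ i → i ≤ k → dirSeq t i = dirSeq t' i) :
    S t k = S t' k := by
  induction k with
  | zero => simp [S]
  | succ k ih =>
    simp only [S]
    rw [ih (fun i a b => h i a (by omega)), h (k+1) (by omega) le_rfl]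

lemma exists_cross (f : ℕ → ℕ) (N q : ℕ) (h0 : f 0 < q) (hN : q ≤ f N) :
    ∃ k < N, f k < q ∧ q ≤ f (k + 1) := by
  induction N with
  | zero => omega
  | succ N ih =>
    rcases Nat.lt_or_ge (f N) q with h | h
    · exact ⟨N, by omega, h, hN⟩
    · obtain ⟨k, hk, h1, h2⟩ := ih h
      exact ⟨k, by omega, h1, h2⟩

/-- If S t j = j then all letters up to j equal 1. -/
lemma all_ones_of_S_eq (j : ℕ) (H : ∀ i, 1 ≤ i → i ≤ j → t i = 1 ∨ t i = 2)
    (hS : S t j ≤ j) : ∀ l, 1 ≤ l → l ≤ j → dirSeq t l = 1 := by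
  have hstep : ∀ l, l < j → S t l + 1 ≤ S t (l + 1) := by
    intro l hl
    have : 1 ≤ dirSeq t (l + 1) := by
      rcases dirSeq_values t (q := l + 1) (by omega)
        (fun i a b => H i a (by omega)) with h | h <;> omega
    simp only [S]; omega
  have key : ∀ b, b ≤ j → ∀ a, a ≤ b → S t a + (b - a) ≤ S t b := by
    intro b
    induction b with
    | zero => intro _ a ha; simp_all
    | succ b ih =>
      intro hb a ha
      rcases Nat.lt_or_ge a (b+1) with h | h
      · have h1 := ih (by omega) a (by omega)
        have h2 := hstep b (by omega)
        omega
      · have : a = b + 1 := by omega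
        subst this; simp
  intro l h1 h2
  obtain ⟨l', rfl⟩ : ∃ l', l = l' + 1 := ⟨l - 1, by omega⟩
  have e1 := key j le_rfl (l' + 1) h2
  have e2 := key j le_rfl l' (by omega)
  have hv : dirSeq t (l' + 1) = 1 ∨ dirSeq t (l' + 1) = 2 :=
    dirSeq_values t h1 (fun i a b => H i a (by omega))
  have hls : S t (l' + 1) = S t l' + dirSeq t (l' + 1) := rfl
  have hg1 : l' ≤ S t l' := S_ge t l' (fun i a b => H i a (by omega))
  omega

end Blocks


section Key
variable {t t' : ℕ → ℕ}

lemma S_succ (t : ℕ → ℕ) (k : ℕ) : S t (k + 1) = S t k + dirSeq t (k + 1) := rfl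

lemma claim1 (ht : ∀ i, 1 ≤ i → t i = 1 ∨ t i = 2)
    (ht' : ∀ i, 1 ≤ i → t' i = 1 ∨ t' i = 2)
    {j : ℕ} (hagree : ∀ i, i ≠ j + 1 → t i = t' i) :
    ∀ i, 1 ≤ i → i ≤ S t j → dirSeq t' i = dirSeq t i := by
  intro i
  induction i using Nat.strong_induction_on with
  | _ i IH =>
    intro hi1 hij
    have Ht : ∀ N : ℕ, ∀ l, 1 ≤ l → l ≤ N → t l = 1 ∨ t l = 2 := fun N l a _ => ht l a
    have Ht' : ∀ N : ℕ, ∀ l, 1 ≤ l → l ≤ N → t' l = 1 ∨ t' l = 2 := fun N l a _ => ht' l a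
    have h0 : S t 0 < i := by
      have : S t 0 = 0 := rfl
      omega
    obtain ⟨k, hk, hk1, hk2⟩ := exists_cross (S t) j i h0 hij
    have hftk : dirSeq t i = t (k + 1) := dirSeq_block t k i (Ht _) hk1 hk2
    have hSj : j ≤ S t j := S_ge t j (Ht _)
    have hSk : k ≤ S t k := S_ge t k (Ht _)
    have hk_lt_i : k < i := by omega
    have hSeqk : S t' k = S t k := by
      apply S_congr t' t k
      intro l a b
      exact IH l (by omega) a (by omega)
    have hfin : i ≤ S t' (k + 1) := by
      rcases Nat.lt_or_ge (k + 1) i with h | h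
      · have he : dirSeq t' (k + 1) = dirSeq t (k + 1) := IH (k + 1) h (by omega) (by omega)
        rw [S_succ, hSeqk, he, ← S_succ]
        exact hk2
      · have h1 : 1 ≤ dirSeq t' (k + 1) := by
          rcases dirSeq_values t' (q := k + 1) (by omega) (Ht' _) with hv | hv <;> omega
        rw [S_succ, hSeqk]
        omega
    have hblk' : dirSeq t' i = t' (k + 1) := by
      apply dirSeq_block t' k i (Ht' _) (by omega) hfin
    rw [hblk', hftk]
    exact (hagree (k + 1) (by omega)).symm

lemma key {m n j : ℕ} (hm : 1 ≤ m) (hn : m + 2 ≤ n)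
    (ht : ∀ i, 1 ≤ i → t i = 1 ∨ t i = 2)
    (ht' : ∀ i, 1 ≤ i → t' i = 1 ∨ t' i = 2)
    (hagree : ∀ i, i ≠ j + 1 → t i = t' i)
    (h2 : dirSeq t m = 2) (hb1 : S t j < n) (hb2 : n ≤ S t (j + 1)) :
    dirSeq t' m = 2 ∧ S t' j < n ∧ n ≤ S t' (j + 1) := by
  have Ht : ∀ N : ℕ, ∀ l, 1 ≤ l → l ≤ N → t l = 1 ∨ t l = 2 := fun N l a _ => ht l a
  have hSj : j ≤ S t j := S_ge t j (Ht _)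
  have hmS : m ≤ S t j := by
    rcases le_or_gt (j + 1) m with h | h
    · have hv := dirSeq_values t (q := j + 1) (by omega) (Ht _)
      have hs := S_succ t j
      omega
    · omega
  have hj1S : j + 1 ≤ S t j := by
    by_contra h
    have := all_ones_of_S_eq t j (Ht _) (by omega) m hm (by omega)
    omega
  have c1 := claim1 ht ht' hagree
  have hSj' : S t' j = S t j := by
    apply S_congr t' t j
    intro l a b
    exact c1 l a (by omega)
  have hm' : dirSeq t' m = dirSeq t m := c1 m hm hmS
  have hj1' : dirSeq t' (j + 1) = dirSeq t (j + 1) := c1 (j + 1) (by omega) hj1S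
  refine ⟨by omega, by omega, ?_⟩
  rw [S_succ, hSj', hj1', ← S_succ]
  exact hb2

end Key


def Q (m n j : ℕ) (t : ℕ → ℕ) : Prop :=
  dirSeq t m = 2 ∧ S t j < n ∧ n ≤ S t (j + 1)

lemma Q_congr {m n j : ℕ} (hmn : m ≤ n) (hj : j + 1 ≤ n) {s s' : ℕ → ℕ}
    (h : ∀ i, 1 ≤ i → i ≤ n → s i = s' i) : Q m n j s ↔ Q m n j s' := by
  have h1 : dirSeq s m = dirSeq s' m :=
    dirSeq_congr s s' m (fun i a b => h i a (by omega))
  have h2 : S s j = S s' j :=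
    S_congr s s' j (fun l a b => dirSeq_congr s s' l (fun i c d => h i c (by omega)))
  have h3 : S s (j + 1) = S s' (j + 1) :=
    S_congr s s' (j + 1) (fun l a b => dirSeq_congr s s' l (fun i c d => h i c (by omega)))
  unfold Q
  rw [h1, h2, h3]

lemma measurable_cyl {Ω : Type*} [MeasurableSpace Ω] (T : ℕ → Ω → ℕ)
    (hmeas : ∀ i, Measurable (T i)) (P : (ℕ → ℕ) → Prop) (N : ℕ)
    (hP : ∀ s s' : ℕ → ℕ, (∀ i, i ≤ N → s i = s' i) → P s → P s') :
    MeasurableSet {ω | P fun i => T i ω} := by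
  have hset : {ω | P fun i => T i ω} =
      (fun ω => fun i : Fin (N + 1) => T i ω) ⁻¹'
        {v | P fun i => if h : i < N + 1 then v ⟨i, h⟩ else 0} := by
    ext ω
    simp only [Set.mem_setOf_eq, Set.mem_preimage]
    constructor
    · intro h
      refine hP _ _ (fun i hi => ?_) h
      simp [Nat.lt_succ_of_le hi]
    · intro h
      refine hP _ _ (fun i hi => ?_) h
      simp [Nat.lt_succ_of_le hi]
  rw [hset]
  exact (measurable_pi_lambda _ (fun i : Fin (N + 1) => hmeas i))
    ((Set.to_countable _).measurableSet)


lemma Q_key {t t' : ℕ → ℕ} {m n j : ℕ} (hm : 1 ≤ m) (hn : m + 2 ≤ n)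
    (ht : ∀ i, 1 ≤ i → t i = 1 ∨ t i = 2)
    (ht' : ∀ i, 1 ≤ i → t' i = 1 ∨ t' i = 2)
    (hagree : ∀ i, i ≠ j + 1 → t i = t' i)
    (h : Q m n j t) : Q m n j t' := by
  obtain ⟨a, b, c⟩ := h
  obtain ⟨a', b', c'⟩ := key hm hn ht ht' hagree a b c
  exact ⟨a', b', c'⟩

end Stmt11Aux

open MeasureTheory ProbabilityTheory Filter Stmt11Aux

/-- for an i.i.d. directing sequence over {1,2} with
P(T_n = 1) = p ∈ (0,1): for m ≥ 1 and n ≥ m+2,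
P(X_m = 2 and X_n = 1) = p · P(X_m = 2). -/
theorem stmt11 {Ω : Type*} [MeasurableSpace Ω] (μ : Measure Ω)
    [IsProbabilityMeasure μ] (p : ℝ) (hp : p ∈ Set.Ioo (0 : ℝ) 1)
    (T : ℕ → Ω → ℕ) (hmeas : ∀ n, Measurable (T n))
    (hindep : iIndepFun T μ)
    (h1 : ∀ n, 1 ≤ n → μ {ω | T n ω = 1} = ENNReal.ofReal p)
    (h2 : ∀ n, 1 ≤ n → μ {ω | T n ω = 2} = ENNReal.ofReal (1 - p)) :
    ∀ m n, 1 ≤ m → m + 2 ≤ n →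
      μ ({ω | dirSeq (fun k => T k ω) m = 2} ∩ {ω | dirSeq (fun k => T k ω) n = 1})
        = ENNReal.ofReal p * μ {ω | dirSeq (fun k => T k ω) m = 2} := by
  intro m n hm hn
  classical
  set A : Set Ω := {ω | dirSeq (fun k => T k ω) m = 2} with hA
  set B : Set Ω := {ω | dirSeq (fun k => T k ω) n = 1} with hB
  set G : Set Ω := ⋂ i : ℕ, {ω | 1 ≤ i → (T i ω = 1 ∨ T i ω = 2)} with hGdef
  set C : ℕ → Set Ω := fun j => {ω | Q m n j fun i => T i ω} with hC
  set E : ℕ → Set Ω := fun j => {ω | Q m n j fun i => if i = j + 1 then 2 else T i ω} with hE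
  set X : ℕ → Set Ω := fun j => {ω | T (j + 1) ω = 1} with hX
  have hGv : ∀ ω, ω ∈ G → ∀ i, 1 ≤ i → T i ω = 1 ∨ T i ω = 2 := by
    intro ω hω i hi
    exact (Set.mem_iInter.mp hω i) hi
  have hGmem : ∀ ω, (∀ i, 1 ≤ i → T i ω = 1 ∨ T i ω = 2) → ω ∈ G := by
    intro ω h
    exact Set.mem_iInter.mpr fun i hi => h i hi
  -- measurability
  have hsetmeas : ∀ i, MeasurableSet {ω | 1 ≤ i → (T i ω = 1 ∨ T i ω = 2)} := by
    intro i
    by_cases hi : 1 ≤ i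
    · have : {ω | 1 ≤ i → (T i ω = 1 ∨ T i ω = 2)} =
          (T i ⁻¹' {1}) ∪ (T i ⁻¹' {2}) := by
        ext ω; simp [hi]
      rw [this]
      exact ((hmeas i) (measurableSet_singleton 1)).union ((hmeas i) (measurableSet_singleton 2))
    · have : {ω | 1 ≤ i → (T i ω = 1 ∨ T i ω = 2)} = Set.univ := by
        ext ω; simp [hi]
      rw [this]; exact MeasurableSet.univ
  have hGmeas : MeasurableSet G := MeasurableSet.iInter hsetmeas
  have hQc : ∀ j, j < n → ∀ s s' : ℕ → ℕ, (∀ i, i ≤ n → s i = s' i) →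
      Q m n j s → Q m n j s' := by
    intro j hj s s' hss hq
    exact (Q_congr (by omega) (by omega) (fun i a b => hss i b)).mp hq
  have hCmeas : ∀ j, j < n → MeasurableSet (C j) := fun j hj =>
    measurable_cyl T hmeas _ n (hQc j hj)
  have hEmeas : ∀ j, j < n → MeasurableSet (E j) := by
    intro j hj
    apply measurable_cyl T hmeas (fun s => Q m n j fun i => if i = j + 1 then 2 else s i) n
    intro s s' hss hq
    refine (Q_congr (m := m) (n := n) (j := j) (by omega) (by omega)
      (fun i a b => ?_)).mp hq
    by_cases h : i = j + 1 <;> simp [h, hss i b]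
  have hXmeas : ∀ j, MeasurableSet (X j) := by
    intro j
    have : X j = T (j + 1) ⁻¹' {1} := by ext ω; simp [hX]
    rw [this]
    exact (hmeas (j + 1)) (measurableSet_singleton 1)
  -- G is conull
  have hGnull : μ Gᶜ = 0 := by
    rw [hGdef, Set.compl_iInter]
    apply measure_iUnion_null
    intro i
    by_cases hi : 1 ≤ i
    · have hu : {ω | 1 ≤ i → (T i ω = 1 ∨ T i ω = 2)} =
          {ω | T i ω = 1} ∪ {ω | T i ω = 2} := by
        ext ω; simp [hi]
      have hdis : Disjoint {ω | T i ω = 1} {ω | T i ω = 2} := by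
        rw [Set.disjoint_left]
        rintro ω hω1 hω2
        simp only [Set.mem_setOf_eq] at hω1 hω2
        omega
      have hm2 : MeasurableSet {ω | T i ω = 2} := by
        have : {ω | T i ω = 2} = T i ⁻¹' {2} := by ext ω; simp
        rw [this]; exact (hmeas i) (measurableSet_singleton 2)
      have hmu : μ ({ω | T i ω = 1} ∪ {ω | T i ω = 2}) = 1 := by
        rw [measure_union hdis hm2, h1 i hi, h2 i hi,
          ← ENNReal.ofReal_add hp.1.le (by have := hp.2; linarith)]
        norm_num
      have hcompl := measure_compl (hsetmeas i) (measure_ne_top μ _)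
      rw [hcompl, hu, hmu, measure_univ]
      simp
    · have : {ω | 1 ≤ i → (T i ω = 1 ∨ T i ω = 2)} = Set.univ := by
        ext ω; simp [hi]
      rw [this, Set.compl_univ]; simp
  have hconull : ∀ s : Set Ω, μ (s ∩ G) = μ s := fun s => measure_inter_conull hGnull
  -- C and E agree on G
  have hCE : ∀ j, C j ∩ G = E j ∩ G := by
    intro j
    ext ω
    simp only [hC, hE, Set.mem_inter_iff, Set.mem_setOf_eq, and_congr_left_iff]
    intro hωG
    have ht : ∀ i, 1 ≤ i → T i ω = 1 ∨ T i ω = 2 := hGv ω hωG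
    have ht' : ∀ i, 1 ≤ i →
        (if i = j + 1 then 2 else T i ω) = 1 ∨ (if i = j + 1 then 2 else T i ω) = 2 := by
      intro i hi
      by_cases h : i = j + 1
      · simp [h]
      · simpa [h] using ht i hi
    have hag : ∀ i, i ≠ j + 1 → T i ω = (if i = j + 1 then 2 else T i ω) := by
      intro i h; simp [h]
    constructor
    · intro hq
      exact Q_key hm hn ht ht' hag hq
    · intro hq
      exact Q_key hm hn ht' ht (fun i h => (hag i h).symm) hq
  -- on C j ∩ G, the event B coincides with X j
  have hCB : ∀ j, C j ∩ B ∩ G = C j ∩ X j ∩ G := by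
    intro j
    ext ω
    simp only [hC, hB, hX, Set.mem_inter_iff, Set.mem_setOf_eq]
    constructor
    · rintro ⟨⟨hq, hb⟩, hg⟩
      obtain ⟨a, b, c⟩ := hq
      have heq : dirSeq (fun k => T k ω) n = T (j + 1) ω :=
        dirSeq_block (fun k => T k ω) j n (fun i hi _ => hGv ω hg i hi) b c
      exact ⟨⟨⟨a, b, c⟩, by rw [← heq]; exact hb⟩, hg⟩
    · rintro ⟨⟨hq, hx⟩, hg⟩
      obtain ⟨a, b, c⟩ := hq
      have heq : dirSeq (fun k => T k ω) n = T (j + 1) ω :=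
        dirSeq_block (fun k => T k ω) j n (fun i hi _ => hGv ω hg i hi) b c
      exact ⟨⟨⟨a, b, c⟩, by rw [heq]; exact hx⟩, hg⟩
  -- coverage
  have hcover : A ∩ G = ⋃ j ∈ Finset.range n, (C j ∩ G) := by
    ext ω
    constructor
    · rintro ⟨hωA, hωG⟩
      have ht : ∀ i, 1 ≤ i → T i ω = 1 ∨ T i ω = 2 := hGv ω hωG
      have h0 : S (fun k => T k ω) 0 < n := by
        have h00 : S (fun k => T k ω) 0 = 0 := rfl
        omega
      have hNn : n ≤ S (fun k => T k ω) n := S_ge _ n (fun i a _ => ht i a)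
      obtain ⟨j, hj, a, b⟩ := exists_cross (S fun k => T k ω) n n h0 hNn
      exact Set.mem_biUnion (Finset.mem_range.mpr hj) ⟨⟨hωA, a, b⟩, hωG⟩
    · intro hω
      obtain ⟨j, _, hq, hg⟩ := Set.mem_iUnion₂.mp hω
      obtain ⟨a, _, _⟩ := hq
      exact ⟨a, hg⟩
  -- pairwise disjointness of the C j
  have hCdisj : ∀ j j', j ≠ j' → Disjoint (C j) (C j') := by
    intro j j' hne
    rw [Set.disjoint_left]
    rintro ω hq hq'
    obtain ⟨_, a, b⟩ := hq
    obtain ⟨_, a', b'⟩ := hq'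
    rcases lt_or_gt_of_ne hne with h | h
    · have := S_mono (fun k => T k ω) (show j + 1 ≤ j' by omega); omega
    · have := S_mono (fun k => T k ω) (show j' + 1 ≤ j by omega); omega
  -- independence
  have hip : ∀ j, j < n → μ (E j ∩ X j) = ENNReal.ofReal p * μ (E j) := by
    intro j hj
    set F1 : Finset ℕ := {j + 1} with hF1
    set F2 : Finset ℕ := (Finset.range (n + 1)).erase (j + 1) with hF2
    have hdisj : Disjoint F2 F1 := by
      simp [hF1, hF2, Finset.disjoint_singleton_right]
    have hIF := hindep.indepFun_finset F2 F1 hdisj hmeas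
    set s2 : Set (↥F2 → ℕ) :=
      {v | Q m n j fun i => if h : i ∈ F2 then v ⟨i, h⟩ else (if i = j + 1 then 2 else 0)}
      with hs2
    set s1 : Set (↥F1 → ℕ) := {v | v ⟨j + 1, by simp [hF1]⟩ = 1} with hs1
    have hres := hIF.measure_inter_preimage_eq_mul s2 s1
      ((Set.to_countable _).measurableSet) ((Set.to_countable _).measurableSet)
    have e2 : (fun ω (i : ↥F2) => T i ω) ⁻¹' s2 = E j := by
      ext ω
      simp only [Set.mem_preimage, hs2, Set.mem_setOf_eq, hE]
      apply Q_congr (by omega) (by omega)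
      intro i a b
      by_cases h : i = j + 1
      · subst h
        have hni : (j + 1 : ℕ) ∉ F2 := by simp [hF2]
        simp [hni]
      · have hii : i ∈ F2 := by
          simp [hF2, h]
          omega
        simp [h, hii]
    have e1 : (fun ω (i : ↥F1) => T i ω) ⁻¹' s1 = X j := by
      ext ω
      simp [hs1, hX]
    rw [e2, e1] at hres
    rw [hres, h1 (j + 1) (by omega), mul_comm]
  -- assembling
  have hABG : A ∩ B ∩ G = ⋃ j ∈ Finset.range n, (C j ∩ X j ∩ G) := by
    ext ω
    constructor
    · rintro ⟨⟨ha, hb⟩, hg⟩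
      have : ω ∈ ⋃ j ∈ Finset.range n, (C j ∩ G) := hcover ▸ (⟨ha, hg⟩ : ω ∈ A ∩ G)
      obtain ⟨j, hjn, hcj, _⟩ := Set.mem_iUnion₂.mp this
      refine Set.mem_biUnion hjn ?_
      exact (Set.ext_iff.mp (hCB j) ω).mp ⟨⟨hcj, hb⟩, hg⟩
    · intro hω
      obtain ⟨j, hjn, hmem⟩ := Set.mem_iUnion₂.mp hω
      obtain ⟨⟨hcj, hbj⟩, hg⟩ := (Set.ext_iff.mp (hCB j) ω).mpr hmem
      obtain ⟨a, _, _⟩ := hcj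
      exact ⟨⟨a, hbj⟩, hg⟩
  have hpd1 : (↑(Finset.range n) : Set ℕ).PairwiseDisjoint
      (fun j => C j ∩ X j ∩ G) := by
    intro j _ j' _ hne
    exact (hCdisj j j' hne).mono
      (Set.inter_subset_left.trans Set.inter_subset_left)
      (Set.inter_subset_left.trans Set.inter_subset_left)
  have hpd2 : (↑(Finset.range n) : Set ℕ).PairwiseDisjoint (fun j => C j ∩ G) := by
    intro j _ j' _ hne
    exact (hCdisj j j' hne).mono Set.inter_subset_left Set.inter_subset_left
  calc μ (A ∩ B) = μ (A ∩ B ∩ G) := (hconull _).symm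
    _ = μ (⋃ j ∈ Finset.range n, (C j ∩ X j ∩ G)) := by rw [hABG]
    _ = ∑ j ∈ Finset.range n, μ (C j ∩ X j ∩ G) :=
        measure_biUnion_finset hpd1 (fun j hj =>
          ((hCmeas j (Finset.mem_range.mp hj)).inter (hXmeas j)).inter hGmeas)
    _ = ∑ j ∈ Finset.range n, μ (E j ∩ X j ∩ G) := by
        refine Finset.sum_congr rfl (fun j hj => ?_)
        congr 1
        ext ω
        constructor
        · rintro ⟨⟨hc, hx⟩, hg⟩
          have := (Set.ext_iff.mp (hCE j) ω).mp ⟨hc, hg⟩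
          exact ⟨⟨this.1, hx⟩, hg⟩
        · rintro ⟨⟨he, hx⟩, hg⟩
          have := (Set.ext_iff.mp (hCE j) ω).mpr ⟨he, hg⟩
          exact ⟨⟨this.1, hx⟩, hg⟩
    _ = ∑ j ∈ Finset.range n, μ (E j ∩ X j) := by
        refine Finset.sum_congr rfl (fun j hj => ?_)
        exact hconull _
    _ = ∑ j ∈ Finset.range n, ENNReal.ofReal p * μ (E j) :=
        Finset.sum_congr rfl (fun j hj => hip j (Finset.mem_range.mp hj))
    _ = ENNReal.ofReal p * ∑ j ∈ Finset.range n, μ (E j) :=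
        (Finset.mul_sum _ _ _).symm
    _ = ENNReal.ofReal p * ∑ j ∈ Finset.range n, μ (E j ∩ G) := by
        congr 1
        exact Finset.sum_congr rfl (fun j hj => (hconull (E j)).symm)
    _ = ENNReal.ofReal p * ∑ j ∈ Finset.range n, μ (C j ∩ G) := by
        congr 1
        exact Finset.sum_congr rfl (fun j hj => by rw [hCE j])
    _ = ENNReal.ofReal p * μ (⋃ j ∈ Finset.range n, (C j ∩ G)) := by
        rw [measure_biUnion_finset hpd2 (fun j hj =>
          (hCmeas j (Finset.mem_range.mp hj)).inter hGmeas)]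
    _ = ENNReal.ofReal p * μ (A ∩ G) := by rw [← hcover]
    _ = ENNReal.ofReal p * μ A := by rw [hconull]
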